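/- Let V be an n-dimensional real inner product space with n ≥ 2, W a real inner product space, α : V × V → W a symmetric bilinear map, ρ-data given by a symmetric bilinear form h : V × V → ℝ, and δ ∈ W. Suppose that for all X,Y,Z,W' ∈ V the expression ⟨X,Z⟩(⟨α(Y,W'),δ⟩ - h(Y,W')) + ⟨Y,W'⟩(⟨α(X,Z),δ⟩ - h(X,Z)) - ⟨X,W'⟩(⟨α(Y,Z),δ⟩ - h(Y,Z)) - ⟨Y,Z⟩(⟨α(X,W'),δ⟩ - h(X,W')) vanishes and dim V ≥ 3. Then ⟨α(X,Y),δ⟩ = h(X,Y) for all X,Y ∈ V. -/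
import Mathlib


open scoped InnerProductSpace

lemma exists_unit_orth {V : Type*} [NormedAddCommGroup V] [InnerProductSpace ℝ V]
    [FiniteDimensional ℝ V] (hdim : 3 ≤ Module.finrank ℝ V) (X Y : V) :
    ∃ Z : V, ‖Z‖ = 1 ∧ ⟪X, Z⟫_ℝ = 0 ∧ ⟪Y, Z⟫_ℝ = 0 := by
  classical
  set K : Submodule ℝ V := Submodule.span ℝ (↑({X, Y} : Finset V)) with hK
  have hKle : Module.finrank ℝ K ≤ 2 := by
    refine (finrank_span_finset_le_card ({X, Y} : Finset V)).trans ?_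
    exact (Finset.card_insert_le X {Y}).trans (by simp)
  have hne : Kᗮ ≠ ⊥ := by
    intro hbot
    have hKtop : K = ⊤ := by rwa [Submodule.orthogonal_eq_bot_iff] at hbot
    rw [hKtop, finrank_top] at hKle
    omega
  obtain ⟨z, hz, hz0⟩ := Submodule.exists_mem_ne_zero_of_ne_bot hne
  have horth : ∀ u ∈ K, ⟪u, z⟫_ℝ = 0 := fun u hu => (Submodule.mem_orthogonal K z).mp hz u hu
  have hX : ⟪X, z⟫_ℝ = 0 := horth X (Submodule.subset_span (by simp))
  have hY : ⟪Y, z⟫_ℝ = 0 := horth Y (Submodule.subset_span (by simp))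
  refine ⟨‖z‖⁻¹ • z, norm_smul_inv_norm hz0, ?_, ?_⟩ <;>
    rw [real_inner_smul_right] <;> simp [hX, hY]

/-- If the Gauss-type quadratic expression built from a symmetric bilinear map `α`,
a symmetric bilinear form `h` and a fixed vector `δ` vanishes identically on an
inner product space of dimension at least 3, then `⟪α X Y, δ⟫ = h X Y`. -/
theorem stmt_2 {V W : Type*} [NormedAddCommGroup V] [InnerProductSpace ℝ V]
    [NormedAddCommGroup W] [InnerProductSpace ℝ W] [FiniteDimensional ℝ V]
    (hdim : 3 ≤ Module.finrank ℝ V)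
    (α : V →ₗ[ℝ] V →ₗ[ℝ] W) (hα : ∀ X Y : V, α X Y = α Y X)
    (h : V →ₗ[ℝ] V →ₗ[ℝ] ℝ) (hh : ∀ X Y : V, h X Y = h Y X) (δ : W)
    (hyp : ∀ X Y Z W' : V,
      ⟪X, Z⟫_ℝ * (⟪α Y W', δ⟫_ℝ - h Y W') + ⟪Y, W'⟫_ℝ * (⟪α X Z, δ⟫_ℝ - h X Z)
      - ⟪X, W'⟫_ℝ * (⟪α Y Z, δ⟫_ℝ - h Y Z) - ⟪Y, Z⟫_ℝ * (⟪α X W', δ⟫_ℝ - h X W') = 0) :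
    ∀ X Y : V, ⟪α X Y, δ⟫_ℝ = h X Y := by
  set P : V → V → ℝ := fun a b => ⟪α a b, δ⟫_ℝ - h a b with hP
  have inner_one : ∀ Z : V, ‖Z‖ = 1 → ⟪Z, Z⟫_ℝ = 1 := by
    intro Z hZ
    rw [real_inner_self_eq_norm_sq, hZ, one_pow]
  have key1 : ∀ a b Z : V, ‖Z‖ = 1 → ⟪a, Z⟫_ℝ = 0 → ⟪b, Z⟫_ℝ = 0 →
      P a b = -⟪a, b⟫_ℝ * P Z Z := by
    intro a b Z hZ ha hb
    have := hyp a Z Z b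
    have hZb : ⟪Z, b⟫_ℝ = 0 := by rw [real_inner_comm]; exact hb
    rw [ha, hZb, inner_one Z hZ] at this
    simp only [hP]
    nlinarith [this]
  have key2 : ∀ Z U : V, ‖Z‖ = 1 → ‖U‖ = 1 → ⟪Z, U⟫_ℝ = 0 →
      P U U + P Z Z = 0 := by
    intro Z U hZ hU hZU
    have := hyp Z U Z U
    have hUZ : ⟪U, Z⟫_ℝ = 0 := by rw [real_inner_comm]; exact hZU
    rw [hZU, hUZ, inner_one Z hZ, inner_one U hU] at this
    simp only [hP]
    nlinarith [this]
  have diag : ∀ Z : V, ‖Z‖ = 1 → P Z Z = 0 := by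
    intro Z hZ
    obtain ⟨U, hU, hZU, -⟩ := exists_unit_orth hdim Z Z
    obtain ⟨E, hE, hZE, hUE⟩ := exists_unit_orth hdim Z U
    have h1 := key2 Z U hZ hU hZU
    have h2 := key2 Z E hZ hE hZE
    have h3 := key2 U E hU hE hUE
    linarith
  intro X Y
  obtain ⟨Z, hZ, hXZ, hYZ⟩ := exists_unit_orth hdim X Y
  have := key1 X Y Z hZ hXZ hYZ
  rw [diag Z hZ] at this
  have : P X Y = 0 := by rw [this]; ring
  simpa [hP, sub_eq_zero] using this
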